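/- Define h : ℂ → 𝔻 by h(z) = z/(1+|z|); h is a homeomorphism from ℂ onto the open unit disk 𝔻. Let f : ℂ → ℂ be a homeomorphism such that sup_{z∈ℂ} |f(z) − z| < ∞ (f − Id is bounded). Then there exists a homeomorphism g of the closed unit disk {w ∈ ℂ : |w| ≤ 1} onto itself such that g(w) = h(f(h⁻¹(w))) for every w with |w| < 1 and g(w) = w for every w with |w| = 1. (Claim proved in the genus-one case of the proof of Theorem 0.3: if f − Id is bounded, then the conjugate of f by h extends to the closed disk by the identity on the boundary circle.) -/

import Mathlib

open Set Metric Complex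

noncomputable section

/-- The open unit disk in the complex plane. -/
abbrev Disk : Set ℂ := Metric.ball 0 1

/-- The map `h : z ↦ z / (1 + |z|)`. -/
def hmap (z : ℂ) : ℂ := z / (1 + ‖z‖)

def hinv (w : ℂ) : ℂ := w / (1 - ‖w‖)

lemma hmap_eq (z : ℂ) : hmap z = z / ((1 + ‖z‖ : ℝ) : ℂ) := by
  unfold hmap; push_cast; ring

lemma hinv_eq (w : ℂ) : hinv w = w / ((1 - ‖w‖ : ℝ) : ℂ) := by
  unfold hinv; push_cast; ring

lemma one_add_abs_pos (z : ℂ) : (0:ℝ) < 1 + ‖z‖ := by positivity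

lemma abs_hmap (z : ℂ) : ‖hmap z‖ = ‖z‖ / (1 + ‖z‖) := by
  rw [hmap_eq, norm_div, Complex.norm_real, Real.norm_eq_abs, abs_of_pos (one_add_abs_pos z)]

lemma abs_hmap_lt_one (z : ℂ) : ‖hmap z‖ < 1 := by
  rw [abs_hmap, div_lt_one (one_add_abs_pos z)]
  linarith [norm_nonneg z]

lemma hmap_mem (z : ℂ) : hmap z ∈ Disk := by
  simpa [mem_ball_zero_iff] using abs_hmap_lt_one z

lemma hinv_hmap (z : ℂ) : hinv (hmap z) = z := by
  have hA : (0:ℝ) < 1 + ‖z‖ := one_add_abs_pos z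
  rw [hinv_eq, abs_hmap, hmap_eq]
  have h1 : (1 - ‖z‖ / (1 + ‖z‖) : ℝ) = 1 / (1 + ‖z‖) := by
    field_simp; ring
  rw [h1]
  rw [div_div, ← Complex.ofReal_mul]
  have : ((1 + ‖z‖) * (1 / (1 + ‖z‖)) : ℝ) = 1 := by field_simp
  rw [this, Complex.ofReal_one, div_one]

lemma abs_hinv (w : ℂ) (hw : ‖w‖ < 1) :
    ‖hinv w‖ = ‖w‖ / (1 - ‖w‖) := by
  rw [hinv_eq, norm_div, Complex.norm_real, Real.norm_eq_abs, abs_of_pos (by linarith)]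

lemma hmap_hinv (w : ℂ) (hw : ‖w‖ < 1) : hmap (hinv w) = w := by
  have hA : (0:ℝ) < 1 - ‖w‖ := by linarith
  rw [hmap_eq, abs_hinv w hw, hinv_eq]
  have h1 : (1 + ‖w‖ / (1 - ‖w‖) : ℝ) = 1 / (1 - ‖w‖) := by
    field_simp; ring
  rw [h1]
  rw [div_div, ← Complex.ofReal_mul]
  have : ((1 - ‖w‖) * (1 / (1 - ‖w‖)) : ℝ) = 1 := by field_simp
  rw [this, Complex.ofReal_one, div_one]

lemma hmap_continuous : Continuous hmap := by
  have : Continuous fun z : ℂ => ((1 + ‖z‖ : ℝ) : ℂ) :=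
    Complex.continuous_ofReal.comp (continuous_const.add continuous_norm)
  have h := Continuous.div continuous_id this (fun z =>
    Complex.ofReal_ne_zero.mpr (one_add_abs_pos z).ne')
  have : hmap = fun z : ℂ => z / ((1 + ‖z‖ : ℝ) : ℂ) := funext hmap_eq
  rw [this]; exact h

lemma hinv_continuousOn : ContinuousOn hinv Disk := by
  have heq : ∀ w, hinv w = w / ((1 - ‖w‖ : ℝ) : ℂ) := hinv_eq
  have : ContinuousOn (fun w : ℂ => w / ((1 - ‖w‖ : ℝ) : ℂ)) Disk := by
    apply ContinuousOn.div continuousOn_id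
    · exact (Complex.continuous_ofReal.comp
        (continuous_const.sub continuous_norm)).continuousOn
    · intro w hw
      have hw' : ‖w‖ < 1 := by
        simpa [mem_ball_zero_iff] using hw
      exact Complex.ofReal_ne_zero.mpr (show (0:ℝ) < 1 - ‖w‖ by linarith).ne'
  exact this.congr fun w _ => heq w

lemma key_est (z b : ℂ) (C : ℝ) (hb : ‖b‖ ≤ C) :
    ‖hmap (z + b) - hmap z‖ ≤ 2 * C / (1 + ‖z‖) := by
  set a := ‖z‖ with ha
  set a' := ‖z + b‖ with ha'
  have hA : (0:ℝ) < 1 + a := one_add_abs_pos z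
  have hA' : (0:ℝ) < 1 + a' := one_add_abs_pos (z+b)
  have hAne : ((1 + a : ℝ) : ℂ) ≠ 0 := by
    exact_mod_cast hA.ne'
  have hA'ne : ((1 + a' : ℝ) : ℂ) ≠ 0 := by
    exact_mod_cast hA'.ne'
  have hid : hmap (z + b) - hmap z
      = b / ((1+a : ℝ):ℂ) + (z + b) * (((a:ℝ):ℂ) - ((a':ℝ):ℂ)) / (((1+a:ℝ):ℂ) * ((1+a':ℝ):ℂ)) := by
    rw [hmap_eq, hmap_eq, ← ha, ← ha']
    push_cast
    have e1 : (1:ℂ) + (a:ℝ) ≠ 0 := by exact_mod_cast hA.ne'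
    have e2 : (1:ℂ) + (a':ℝ) ≠ 0 := by exact_mod_cast hA'.ne'
    field_simp
    ring
  rw [hid]
  have hdiff : |a - a'| ≤ C := by
    have h2 : |a' - a| ≤ ‖b‖ := by
      simpa [ha, ha'] using abs_norm_sub_norm_le (z + b) z
    rw [abs_sub_comm]
    exact h2.trans hb
  have h1 : ‖b / ((1+a : ℝ):ℂ)‖ ≤ C / (1 + a) := by
    rw [norm_div, Complex.norm_real, Real.norm_eq_abs, abs_of_pos hA]
    gcongr
  have h2 : ‖(z + b) * (((a:ℝ):ℂ) - ((a':ℝ):ℂ)) / (((1+a:ℝ):ℂ) * ((1+a':ℝ):ℂ))‖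
      ≤ C / (1 + a) := by
    rw [norm_div, norm_mul, norm_mul, Complex.norm_real, Complex.norm_real, Real.norm_eq_abs, Real.norm_eq_abs,
      abs_of_pos hA, abs_of_pos hA', ← Complex.ofReal_sub, Complex.norm_real, Real.norm_eq_abs, ← ha']
    rw [div_le_div_iff₀ (by positivity) hA]
    have hC : 0 ≤ C := (norm_nonneg b).trans hb
    have s1 : a' * |a - a'| * (1+a) ≤ a' * C * (1+a) := by
      nlinarith [mul_le_mul_of_nonneg_left hdiff
        (mul_nonneg (norm_nonneg (z+b)) hA.le)]
    have s2 : a' * C * (1+a) ≤ C * ((1+a)*(1+a')) := by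
      nlinarith [mul_nonneg hC hA.le]
    linarith
  refine (norm_add_le _ _).trans ?_
  have : C / (1+a) + C / (1+a) = 2 * C / (1+a) := by ring
  linarith

def Hhomeo : ℂ ≃ₜ ↥Disk where
  toFun := fun z => ⟨hmap z, hmap_mem z⟩
  invFun := fun w => hinv w.1
  left_inv := hinv_hmap
  right_inv := fun w => Subtype.ext (hmap_hinv w.1 (by
    have := mem_ball_zero_iff.mp w.2
    exact this))
  continuous_toFun := hmap_continuous.subtype_mk _
  continuous_invFun := hinv_continuousOn.restrict

def Gfun (e : ℂ ≃ₜ ℂ) (w : ℂ) : ℂ :=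
  if ‖w‖ = 1 then w else hmap (e (hinv w))

lemma Gfun_mem (e : ℂ ≃ₜ ℂ) {w : ℂ} (hw : w ∈ closedBall (0:ℂ) 1) :
    Gfun e w ∈ closedBall (0:ℂ) 1 := by
  unfold Gfun; split
  · exact hw
  · simp only [mem_closedBall_zero_iff]
    exact (abs_hmap_lt_one _).le

lemma Gfun_inv (e : ℂ ≃ₜ ℂ) {w : ℂ} (hw : w ∈ closedBall (0:ℂ) 1) :
    Gfun e.symm (Gfun e w) = w := by
  have hw' : ‖w‖ ≤ 1 := by
    simpa [mem_closedBall_zero_iff] using hw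
  rcases hw'.lt_or_eq with h1 | h1
  · have hG : Gfun e w = hmap (e (hinv w)) := if_neg h1.ne
    have hlt : ‖Gfun e w‖ < 1 := by rw [hG]; exact abs_hmap_lt_one _
    rw [Gfun, if_neg hlt.ne, hG, hinv_hmap, Homeomorph.symm_apply_apply, hmap_hinv w h1]
  · simp [Gfun, h1]

lemma Gfun_contOn (e : ℂ ≃ₜ ℂ) (C : ℝ) (hC : ∀ z, ‖e z - z‖ ≤ C) :
    ContinuousOn (Gfun e) (closedBall (0:ℂ) 1) := by
  have hC0 : 0 ≤ C := (norm_nonneg _).trans (hC 0)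
  intro w hw
  have hw' : ‖w‖ ≤ 1 := by
    simpa [mem_closedBall_zero_iff] using hw
  rcases hw'.lt_or_eq with h1 | h1
  · -- interior point
    have hball : w ∈ Disk := by
      simpa [mem_ball_zero_iff] using h1
    have hcA : ContinuousAt (fun x => hmap (e (hinv x))) w :=
      hmap_continuous.continuousAt.comp (e.continuous.continuousAt.comp
        (hinv_continuousOn.continuousAt (isOpen_ball.mem_nhds hball)))
    have hEq : (fun x => hmap (e (hinv x))) =ᶠ[nhds w] Gfun e := by
      filter_upwards [isOpen_ball.mem_nhds hball] with x hx
      have hx1 : ‖x‖ < 1 := by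
        simpa [mem_ball_zero_iff] using hx
      rw [Gfun, if_neg hx1.ne]
    exact (hcA.congr hEq).continuousWithinAt
  · -- boundary point
    have key : ∀ x ∈ closedBall (0:ℂ) 1,
        ‖Gfun e x - x‖ ≤ 2 * C * (1 - ‖x‖) := by
      intro x hx
      have hx' : ‖x‖ ≤ 1 := by
        simpa [mem_closedBall_zero_iff] using hx
      rcases hx'.lt_or_eq with h2 | h2
      · have hG : Gfun e x = hmap (e (hinv x)) := if_neg h2.ne
        set z := hinv x with hz
        have hxz : hmap z = x := hmap_hinv x h2
        have hkey := key_est z (e z - z) C (hC z)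
        rw [add_sub_cancel] at hkey
        have hpos : (0:ℝ) < 1 - ‖x‖ := by linarith
        have hden : 1 + ‖z‖ = 1 / (1 - ‖x‖) := by
          rw [hz, abs_hinv x h2]; field_simp; ring
        calc ‖Gfun e x - x‖ = ‖hmap (e z) - hmap z‖ := by
              rw [hG, hxz]
          _ ≤ 2 * C / (1 + ‖z‖) := hkey
          _ = 2 * C * (1 - ‖x‖) := by rw [hden]; field_simp
      · rw [Gfun, if_pos h2, sub_self, norm_zero, h2]
        simp
    have t1 : Filter.Tendsto (fun x : ℂ => x) (nhdsWithin w (closedBall (0:ℂ) 1)) (nhds w) :=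
      Filter.tendsto_id.mono_left nhdsWithin_le_nhds
    have t2 : Filter.Tendsto (fun x => Gfun e x - x)
        (nhdsWithin w (closedBall (0:ℂ) 1)) (nhds 0) := by
      apply squeeze_zero_norm'
      · filter_upwards [self_mem_nhdsWithin] with x hx
        simpa using key x hx
      · have hcont : Filter.Tendsto (fun x : ℂ => 2 * C * (1 - ‖x‖)) (nhds w)
            (nhds (2 * C * (1 - ‖w‖))) :=
          (continuous_const.mul (continuous_const.sub continuous_norm)).tendsto w
        rw [h1] at hcont
        simpa using hcont.mono_left nhdsWithin_le_nhds
    have t3 := t1.add t2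
    have hGw : Gfun e w = w := if_pos h1
    unfold ContinuousWithinAt
    rw [hGw]
    simpa using t3


/-- Claim proved in the genus-one case of the proof of Theorem 0.3. -/
theorem handel_thm_0_3_genus_one (f : ℂ ≃ₜ ℂ)
    (hbd : ∃ C : ℝ, ∀ z : ℂ, ‖f z - z‖ ≤ C) :
    (∃ H : ℂ ≃ₜ ↥Disk, ∀ z : ℂ, (H z).1 = hmap z) ∧
    ∃ g : ↥(Metric.closedBall (0:ℂ) 1) ≃ₜ ↥(Metric.closedBall (0:ℂ) 1),
      (∀ w : ↥(Metric.closedBall (0:ℂ) 1), ‖w.1‖ = 1 → (g w).1 = w.1) ∧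
      (∀ z : ℂ, ∀ w : ↥(Metric.closedBall (0:ℂ) 1), w.1 = hmap z →
        (g w).1 = hmap (f z)) := by
  obtain ⟨C, hC⟩ := hbd
  constructor
  · exact ⟨Hhomeo, fun z => rfl⟩
  · have hC' : ∀ w : ℂ, ‖f.symm w - w‖ ≤ C := by
      intro w
      have h := hC (f.symm w)
      rw [f.apply_symm_apply] at h
      rwa [norm_sub_rev] at h
    haveI : CompactSpace ↥(closedBall (0:ℂ) 1) :=
      isCompact_iff_compactSpace.mp (isCompact_closedBall (0:ℂ) 1)
    let Geq : ↥(closedBall (0:ℂ) 1) ≃ ↥(closedBall (0:ℂ) 1) :=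
      { toFun := fun w => ⟨Gfun f w.1, Gfun_mem f w.2⟩
        invFun := fun w => ⟨Gfun f.symm w.1, Gfun_mem f.symm w.2⟩
        left_inv := fun w => Subtype.ext (Gfun_inv f w.2)
        right_inv := fun w => Subtype.ext (by
          have h := Gfun_inv f.symm (w := w.1) w.2
          rwa [Homeomorph.symm_symm] at h) }
    have hcont : Continuous Geq :=
      ((Gfun_contOn f C hC).restrict).subtype_mk _
    refine ⟨hcont.homeoOfEquivCompactToT2, ?_, ?_⟩
    · intro w hw1
      show Gfun f w.1 = w.1
      exact if_pos hw1
    · intro z w hw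
      show Gfun f w.1 = hmap (f z)
      rw [hw, Gfun, if_neg (abs_hmap_lt_one z).ne, hinv_hmap]
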